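/- Let n ≥ 1 and let a, a′, b, b′ be Hermitian n×n complex matrices with a² = a′² = b² = b′² = 1 (the identity matrix), such that each of a, a′ commutes with each of b, b′. Let W be a positive semidefinite n×n complex matrix with trace 1. If additionally a and a′ commute with each other (or b and b′ commute with each other), then |Tr(W(ab + ab′ + a′b − a′b′))| ≤ 2. -/

import Mathlib

open Matrix ComplexOrder

private lemma psd_smul {n : ℕ} (c : ℂ) (hc : 0 ≤ c) (M : Matrix (Fin n) (Fin n) ℂ)
    (hM : M.PosSemidef) : (c • M).PosSemidef := by
  constructor
  · have h1 := hM.1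
    rw [Matrix.IsHermitian, Matrix.conjTranspose_smul, h1]
    congr 1
    simpa using (Complex.conj_eq_iff_im.mpr (Complex.nonneg_iff.mp hc).2.symm)
  · intro x
    exact (hM.smul hc).2 x

private lemma psd_trace_nonneg {n : ℕ} (M : Matrix (Fin n) (Fin n) ℂ) (hM : M.PosSemidef) :
    0 ≤ M.trace := by
  rw [Matrix.trace]
  apply Finset.sum_nonneg
  intro i _
  exact hM.diag_nonneg

open scoped MatrixOrder in
private lemma psd_trace_mul_nonneg {n : ℕ} (W D : Matrix (Fin n) (Fin n) ℂ)
    (hW : W.PosSemidef) (hD : D.PosSemidef) : 0 ≤ (W * D).trace := by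
  set S := CFC.sqrt W with hS
  have hWS : W = S * S := (CFC.sqrt_mul_sqrt_self W hW.nonneg).symm
  have hSh : Sᴴ = S := (CFC.sqrt_nonneg W).posSemidef.isHermitian
  have h1 : (W * D).trace = (S * D * S).trace := by
    rw [hWS, mul_assoc, Matrix.trace_mul_comm S (S * D), mul_assoc]
  rw [h1]
  have : (S * D * S).PosSemidef := by
    have := hD.conjTranspose_mul_mul_same S
    rwa [hSh] at this
  exact psd_trace_nonneg _ this

theorem classical_bound_of_commuting
    (n : ℕ) (hn : 1 ≤ n)
    (a a' b b' W : Matrix (Fin n) (Fin n) ℂ)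
    (ha : a.IsHermitian) (ha' : a'.IsHermitian)
    (hb : b.IsHermitian) (hb' : b'.IsHermitian)
    (ha2 : a * a = 1) (ha'2 : a' * a' = 1)
    (hb2 : b * b = 1) (hb'2 : b' * b' = 1)
    (hab : Commute a b) (hab' : Commute a b')
    (ha'b : Commute a' b) (ha'b' : Commute a' b')
    (hW : W.PosSemidef) (hWtr : W.trace = 1)
    (hcomm : Commute a a' ∨ Commute b b') :
    ‖(W * (a * b + a * b' + a' * b - a' * b')).trace‖ ≤ 2 := by
  set C : Matrix (Fin n) (Fin n) ℂ := a * b + a * b' + a' * b - a' * b' with hCdef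
  set u : Matrix (Fin n) (Fin n) ℂ := b + b' with hu
  set v : Matrix (Fin n) (Fin n) ℂ := b - b' with hv
  have hau : Commute a u := hab.add_right hab'
  have hav : Commute a v := hab.sub_right hab'
  have ha'u : Commute a' u := ha'b.add_right ha'b'
  have ha'v : Commute a' v := ha'b.sub_right ha'b'
  have hC : C = a * u + a' * v := by rw [hCdef, hu, hv]; noncomm_ring
  -- square of C
  have huu_vv : u * u + v * v = 4 := by
    have h : u * u + v * v = 2 * (b * b) + 2 * (b' * b') := by rw [hu, hv]; noncomm_ring
    rw [h, hb2, hb'2]; norm_num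
  have huv : u * v = b' * b - b * b' := by
    have h : u * v = b * b - b' * b' - (b * b' - b' * b) := by rw [hu, hv]; noncomm_ring
    rw [h, hb2, hb'2]; noncomm_ring
  have hvu : v * u = b * b' - b' * b := by
    have h : v * u = b * b - b' * b' - (b' * b - b * b') := by rw [hu, hv]; noncomm_ring
    rw [h, hb2, hb'2]; noncomm_ring
  have hCsq : C * C = 4 := by
    have expand : C * C = a * a * (u * u) + a * a' * (u * v) + a' * a * (v * u)
        + a' * a' * (v * v) := by
      rw [hC]
      have e1 : a * u * (a * u) = a * a * (u * u) := hau.symm.mul_mul_mul_comm a u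
      have e2 : a * u * (a' * v) = a * a' * (u * v) := ha'u.symm.mul_mul_mul_comm a v
      have e3 : a' * v * (a * u) = a' * a * (v * u) := hav.symm.mul_mul_mul_comm a' u
      have e4 : a' * v * (a' * v) = a' * a' * (v * v) := ha'v.symm.mul_mul_mul_comm a' v
      calc (a * u + a' * v) * (a * u + a' * v)
          = a * u * (a * u) + a * u * (a' * v) + a' * v * (a * u) + a' * v * (a' * v) := by
            noncomm_ring
        _ = _ := by rw [e1, e2, e3, e4]
    have hcross : a * a' * (u * v) + a' * a * (v * u) = 0 := by
      rcases hcomm with h | h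
      · rw [← h.eq, hvu, huv]; noncomm_ring
      · rw [huv, hvu, h.eq]; noncomm_ring
    calc C * C = u * u + v * v + (a * a' * (u * v) + a' * a * (v * u)) := by
          rw [expand, ha2, ha'2]; noncomm_ring
      _ = 4 := by rw [hcross, huu_vv, add_zero]
  -- C is Hermitian
  have hCh : C.IsHermitian := by
    rw [Matrix.IsHermitian, hCdef]
    simp only [Matrix.conjTranspose_add, Matrix.conjTranspose_sub, Matrix.conjTranspose_mul,
      ha.eq, ha'.eq, hb.eq, hb'.eq]
    rw [← hab.eq, ← hab'.eq, ← ha'b.eq, ← ha'b'.eq]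
  -- 2 - C and 2 + C are PSD
  have h4 : (4 : Matrix (Fin n) (Fin n) ℂ) = (4 : ℂ) • 1 := by
    ext i j
    rw [← Matrix.diagonal_ofNat (n := Fin n) (α := ℂ) 4]
    simp [Matrix.diagonal_apply, Matrix.one_apply]
  have h2' : (2 : Matrix (Fin n) (Fin n) ℂ) = (2 : ℂ) • 1 := by
    ext i j
    rw [← Matrix.diagonal_ofNat (n := Fin n) (α := ℂ) 2]
    simp [Matrix.diagonal_apply, Matrix.one_apply]
  have key : ∀ D : Matrix (Fin n) (Fin n) ℂ, D.IsHermitian → D * D = 4 * D →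
      D.PosSemidef := by
    intro D hDh hDsq
    have hDsq' : D * D = (4 : ℂ) • D := by
      rw [hDsq, h4, smul_mul_assoc, one_mul]
    have : D = ((4 : ℂ)⁻¹) • (Dᴴ * D) := by
      rw [hDh.eq, hDsq', smul_smul]
      norm_num
    rw [this]
    refine psd_smul _ ?_ _ (Matrix.posSemidef_conjTranspose_mul_self D)
    rw [Complex.nonneg_iff]
    norm_num
  have hP : (2 - C).PosSemidef := by
    apply key
    · rw [Matrix.IsHermitian, Matrix.conjTranspose_sub, hCh.eq]
      congr 1
      simp
    · rw [h4, h2']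
      simp only [sub_mul, mul_sub, smul_mul_assoc, mul_smul_comm, one_mul, mul_one, smul_smul]
      rw [show C * C = (4 : ℂ) • (1 : Matrix (Fin n) (Fin n) ℂ) from hCsq.trans h4]
      module
  have hQ : (2 + C).PosSemidef := by
    apply key
    · rw [Matrix.IsHermitian, Matrix.conjTranspose_add, hCh.eq]
      congr 1
      simp
    · rw [h4, h2']
      simp only [add_mul, mul_add, smul_mul_assoc, mul_smul_comm, one_mul, mul_one, smul_smul]
      rw [show C * C = (4 : ℂ) • (1 : Matrix (Fin n) (Fin n) ℂ) from hCsq.trans h4]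
      module
  -- trace bounds
  set t : ℂ := (W * C).trace with ht
  have hWmul2 : (W * (2 : Matrix (Fin n) (Fin n) ℂ)).trace = 2 := by
    rw [mul_two, Matrix.trace_add, hWtr]; norm_num
  have h1 : 0 ≤ 2 - t := by
    have := psd_trace_mul_nonneg W (2 - C) hW hP
    rwa [mul_sub, Matrix.trace_sub, hWmul2] at this
  have h2 : 0 ≤ 2 + t := by
    have := psd_trace_mul_nonneg W (2 + C) hW hQ
    rwa [mul_add, Matrix.trace_add, hWmul2] at this
  rw [Complex.nonneg_iff] at h1 h2
  have him : t.im = 0 := by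
    have := h1.2
    simp at this
    linarith [this]
  have hre1 : t.re ≤ 2 := by have := h1.1; simp at this; linarith
  have hre2 : -2 ≤ t.re := by have := h2.1; simp at this; linarith
  have : t = (t.re : ℂ) := Complex.ext (by simp) (by simp [him])
  rw [ht] at this ⊢
  rw [this, Complex.norm_real, Real.norm_eq_abs]
  rw [abs_le]
  exact ⟨hre2, hre1⟩
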